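/- Let X, Y be complex Hilbert spaces and for each n let Yₙ be a finite-dimensional complex inner product space. Let T : X → Y and Tₙ : X → Yₙ be bounded linear operators. Let y ∈ Y and let x† be an element of the orthogonal complement of ker T with T*T x† = T*y, and for each n let x_n† belong to the orthogonal complement of ker Tₙ with Tₙ x_n† = Tₙ x†. If ‖T*T − Tₙ*Tₙ‖ → 0 as n → ∞, then ‖x† − x_n†‖ → 0 as n → ∞. -/

import Mathlib

open ContinuousLinearMap Filter Topology

local notation "⟪" x ", " y "⟫" => @inner ℂ _ _ x y

set_option maxHeartbeats 1000000 in
theorem discrete_regularization_convergence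
    {X Y : Type*} [NormedAddCommGroup X] [InnerProductSpace ℂ X] [CompleteSpace X]
    [NormedAddCommGroup Y] [InnerProductSpace ℂ Y] [CompleteSpace Y]
    {Yn : ℕ → Type*} [∀ n, NormedAddCommGroup (Yn n)]
    [∀ n, InnerProductSpace ℂ (Yn n)] [∀ n, FiniteDimensional ℂ (Yn n)]
    (T : X →L[ℂ] Y) (Tn : ∀ n, X →L[ℂ] Yn n)
    (y : Y) (xdag : X)
    (hxdag_mem : xdag ∈ (LinearMap.ker (T : X →ₗ[ℂ] Y))ᗮ)
    (hxdag : (adjoint T ∘L T) xdag = adjoint T y)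
    (xndag : ℕ → X)
    (hmem : ∀ n, xndag n ∈ (LinearMap.ker (Tn n : X →ₗ[ℂ] Yn n))ᗮ)
    (heq : ∀ n, Tn n (xndag n) = Tn n xdag)
    (hconv : Tendsto (fun n => ‖(adjoint T ∘L T) - (adjoint (Tn n) ∘L Tn n)‖)
      atTop (𝓝 0)) :
    Tendsto (fun n => ‖xdag - xndag n‖) atTop (𝓝 0) := by
  set d : ℕ → X := fun n => xdag - xndag n with hd
  -- d n ∈ ker (Tn n)
  have hker : ∀ n, Tn n (d n) = 0 := by
    intro n; simp [hd, map_sub, heq n]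
  -- orthogonality
  have horth : ∀ n, ⟪d n, xndag n⟫ = 0 := fun n =>
    (Submodule.mem_orthogonal _ _).1 (hmem n) (d n) (LinearMap.mem_ker.2 (hker n))
  have hdd : ∀ n, ⟪d n, d n⟫ = ⟪d n, xdag⟫ := by
    intro n
    have : ⟪d n, xdag - xndag n⟫ = ⟪d n, xdag⟫ - ⟪d n, xndag n⟫ := inner_sub_right _ _ _
    rw [hd]; rw [this, horth n, sub_zero]
  -- boundedness : ‖d n‖ ≤ ‖xdag‖
  have hbd : ∀ n, ‖d n‖ ≤ ‖xdag‖ := by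
    intro n
    have h1 : ‖d n‖ ^ 2 = RCLike.re ⟪d n, xdag⟫ := by
      rw [← hdd n, inner_self_eq_norm_sq]
    have h2 : RCLike.re ⟪d n, xdag⟫ ≤ ‖d n‖ * ‖xdag‖ := re_inner_le_norm _ _
    rcases le_or_gt ‖d n‖ 0 with h | h
    · exact le_trans h (norm_nonneg _)
    · nlinarith
  -- ‖T (d n)‖^2 ≤ ‖A - Bn‖ * ‖xdag‖^2
  have hTd : ∀ n, ‖T (d n)‖ ^ 2 ≤
      ‖(adjoint T ∘L T) - (adjoint (Tn n) ∘L Tn n)‖ * ‖xdag‖ ^ 2 := by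
    intro n
    have h1 : ⟪T (d n), T (d n)⟫ = ⟪((adjoint T ∘L T) - (adjoint (Tn n) ∘L Tn n)) (d n), d n⟫ := by
      rw [sub_apply, comp_apply, comp_apply, hker n, map_zero, sub_zero,
        adjoint_inner_left]
    have h2 : ‖T (d n)‖ ^ 2 = RCLike.re ⟪T (d n), T (d n)⟫ := (inner_self_eq_norm_sq _).symm
    have h3 : RCLike.re ⟪((adjoint T ∘L T) - (adjoint (Tn n) ∘L Tn n)) (d n), d n⟫ ≤
        ‖((adjoint T ∘L T) - (adjoint (Tn n) ∘L Tn n)) (d n)‖ * ‖d n‖ := re_inner_le_norm _ _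
    have h4 : ‖((adjoint T ∘L T) - (adjoint (Tn n) ∘L Tn n)) (d n)‖ ≤
        ‖(adjoint T ∘L T) - (adjoint (Tn n) ∘L Tn n)‖ * ‖d n‖ := le_opNorm _ _
    have h5 := hbd n
    have h6 : (0:ℝ) ≤ ‖(adjoint T ∘L T) - (adjoint (Tn n) ∘L Tn n)‖ := norm_nonneg _
    have h7 : (0:ℝ) ≤ ‖d n‖ := norm_nonneg _
    have h2' : ‖T (d n)‖ ^ 2 =
        RCLike.re ⟪((adjoint T ∘L T) - (adjoint (Tn n) ∘L Tn n)) (d n), d n⟫ := by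
      rw [h2, h1]
    calc ‖T (d n)‖ ^ 2
        = RCLike.re ⟪((adjoint T ∘L T) - (adjoint (Tn n) ∘L Tn n)) (d n), d n⟫ := h2'
      _ ≤ ‖((adjoint T ∘L T) - (adjoint (Tn n) ∘L Tn n)) (d n)‖ * ‖d n‖ := h3
      _ ≤ (‖(adjoint T ∘L T) - (adjoint (Tn n) ∘L Tn n)‖ * ‖d n‖) * ‖d n‖ :=
          mul_le_mul_of_nonneg_right h4 h7
      _ = ‖(adjoint T ∘L T) - (adjoint (Tn n) ∘L Tn n)‖ * (‖d n‖ * ‖d n‖) := by ring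
      _ ≤ ‖(adjoint T ∘L T) - (adjoint (Tn n) ∘L Tn n)‖ * (‖xdag‖ * ‖xdag‖) :=
          mul_le_mul_of_nonneg_left (mul_self_le_mul_self h7 h5) h6
      _ = ‖(adjoint T ∘L T) - (adjoint (Tn n) ∘L Tn n)‖ * ‖xdag‖ ^ 2 := by ring
  -- hence T (d n) → 0 in norm
  have hTd0 : Tendsto (fun n => ‖T (d n)‖) atTop (𝓝 0) := by
    have hsq : Tendsto (fun n => ‖T (d n)‖ ^ 2) atTop (𝓝 0) := by
      apply squeeze_zero (fun n => sq_nonneg _) hTd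
      have := hconv.mul_const (‖xdag‖ ^ 2)
      simpa using this
    have := hsq.sqrt
    simpa [Real.sqrt_sq (norm_nonneg _)] using this
  -- xdag is in the closure of the range of adjoint T
  have hclos : xdag ∈ closure ((LinearMap.range (adjoint T : Y →ₗ[ℂ] X) : Submodule ℂ X) : Set X) := by
    have hker_eq : LinearMap.ker (T : X →ₗ[ℂ] Y) = (LinearMap.range (adjoint T : Y →ₗ[ℂ] X))ᗮ := by
      ext x
      simp only [LinearMap.mem_ker, Submodule.mem_orthogonal]
      constructor
      · rintro hx _ ⟨z, rfl⟩
        simp only [ContinuousLinearMap.coe_coe] at hx ⊢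
        rw [adjoint_inner_left, hx, inner_zero_right]
      · intro h
        have : ∀ z : Y, ⟪z, T x⟫ = 0 := fun z => by
          rw [← adjoint_inner_left]; exact h _ ⟨z, rfl⟩
        exact inner_self_eq_zero.1 (this (T x))
    have := hxdag_mem
    rw [hker_eq, Submodule.orthogonal_orthogonal_eq_closure] at this
    exact this
  -- final epsilon argument
  rw [Metric.tendsto_atTop]
  intro ε hε
  -- choose z with ‖xdag - adjoint T z‖ < δ
  have hδpos : (0:ℝ) < ε ^ 2 / (2 * (‖xdag‖ + 1)) := by positivity
  obtain ⟨w, hw_mem, hw⟩ := Metric.mem_closure_iff.1 hclos _ hδpos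
  obtain ⟨z, rfl⟩ := hw_mem
  rw [dist_eq_norm] at hw
  -- eventually ‖z‖ * ‖T (d n)‖ < ε^2/2
  have hev : ∀ᶠ n in atTop, ‖z‖ * ‖T (d n)‖ < ε ^ 2 / 2 := by
    have h := (hTd0.const_mul ‖z‖)
    rw [mul_zero] at h
    exact h.eventually_lt_const (by positivity)
  rw [eventually_atTop] at hev
  obtain ⟨N, hN⟩ := hev
  refine ⟨N, fun n hn => ?_⟩
  have key : ‖d n‖ ^ 2 < ε ^ 2 := by
    have h1 : ‖d n‖ ^ 2 = RCLike.re ⟪d n, xdag⟫ := by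
      rw [← hdd n, inner_self_eq_norm_sq]
    have hsplit : ⟪d n, xdag⟫ = ⟪d n, xdag - adjoint T z⟫ + ⟪T (d n), z⟫ := by
      rw [inner_sub_right, ← adjoint_inner_right]; ring
    have h2 : RCLike.re ⟪d n, xdag - adjoint T z⟫ ≤ ‖d n‖ * ‖xdag - adjoint T z‖ :=
      re_inner_le_norm _ _
    have h3 : RCLike.re ⟪T (d n), z⟫ ≤ ‖T (d n)‖ * ‖z‖ := re_inner_le_norm _ _
    have h4 : ‖d n‖ * ‖xdag - adjoint T z‖ < ε ^ 2 / 2 := by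
      have hle : ‖d n‖ * ‖xdag - adjoint T z‖ ≤ ‖xdag‖ * (ε ^ 2 / (2 * (‖xdag‖ + 1))) := by
        apply mul_le_mul (hbd n) (le_of_lt hw) (norm_nonneg _) (norm_nonneg _)
      have h0 : (0:ℝ) ≤ ‖xdag‖ := norm_nonneg _
      have hr : ‖xdag‖ / (‖xdag‖ + 1) < 1 := (div_lt_one (by positivity)).2 (by linarith)
      have hre : ‖xdag‖ * (ε ^ 2 / (2 * (‖xdag‖ + 1))) = (‖xdag‖ / (‖xdag‖ + 1)) * (ε ^ 2 / 2) := by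
        have hne : ‖xdag‖ + 1 ≠ 0 := by positivity
        field_simp
      have : ‖xdag‖ * (ε ^ 2 / (2 * (‖xdag‖ + 1))) < 1 * (ε ^ 2 / 2) := by
        rw [hre]; exact mul_lt_mul_of_pos_right hr (by positivity)
      linarith
    have : RCLike.re ⟪d n, xdag⟫ = RCLike.re ⟪d n, xdag - adjoint T z⟫ +
        RCLike.re ⟪T (d n), z⟫ := by rw [hsplit, map_add]
    have h3' : RCLike.re ⟪T (d n), z⟫ < ε ^ 2 / 2 :=
      lt_of_le_of_lt h3 (by rw [mul_comm]; exact hN n hn)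
    rw [h1, this]
    linarith
  rw [Real.dist_eq, sub_zero, abs_of_nonneg (norm_nonneg _)]
  nlinarith [norm_nonneg (d n)]
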